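/- arXiv:2006.00704 — 5 statements merged into one kernel-verified Lean document; each statement's English description precedes it below -/
import Mathlib

section
/- For every integer r ≥ 1, the tuple (x₁, x₂, y₁, y₂, y₃) = (0, 0, t, -t, t) for any nonzero t ∈ ℝ is a non-trivial solution to the symmetric system of polynomial equations (the asymmetric system with π = 1/2, c = 1) which violates the inequality |x₁|^r + |y₁|^{r/2} + |y₂|^{r/2} ≤ |2x₂-x₁|^r + |y₃-y₁|^{r/2} + |y₂+y₃|^{r/2}. -/
open Finset

/-- Index set of the first sum of the symmetric system: quadruples `(α₁, α₂, β₁, β₂)` with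
`α₁ + β₁ + 2α₂ + 2β₂ = ℓ`, `1 ≤ α₁ + α₂ ≤ r`, and `β₁ + β₂ ≤ r - (α₁ + α₂)`. -/
def symIdx1 (r ℓ : ℕ) : Finset (ℕ × ℕ × ℕ × ℕ) :=
  ((Finset.range (ℓ + 1)) ×ˢ (Finset.range (ℓ + 1)) ×ˢ (Finset.range (ℓ + 1)) ×ˢ
      (Finset.range (ℓ + 1))).filter
    (fun q => q.1 + q.2.2.1 + 2 * q.2.1 + 2 * q.2.2.2 = ℓ ∧ 1 ≤ q.1 + q.2.1 ∧
      q.1 + q.2.1 ≤ r ∧ q.2.2.1 + q.2.2.2 ≤ r - (q.1 + q.2.1))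

/-- Index set of the second sum: pairs `(α₁, α₂)` with `α₁ + 2α₂ = ℓ`, `1 ≤ α₁ + α₂ ≤ r`. -/
def symIdx2 (r ℓ : ℕ) : Finset (ℕ × ℕ) :=
  ((Finset.range (ℓ + 1)) ×ˢ (Finset.range (ℓ + 1))).filter
    (fun p => p.1 + 2 * p.2 = ℓ ∧ 1 ≤ p.1 + p.2 ∧ p.1 + p.2 ≤ r)

/-- Left-hand side of the `ℓ`-th equation of the symmetric system of order `r`. -/
noncomputable def symLHS (r ℓ : ℕ) (x₁ x₂ y₁ y₂ y₃ : ℝ) : ℝ :=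
  (∑ q ∈ symIdx1 r ℓ,
      2 ^ q.2.2.1 * (-x₁) ^ q.1 * x₂ ^ q.2.2.1 * y₂ ^ q.2.1 * y₃ ^ q.2.2.2 /
        (2 ^ (q.2.1 + q.2.2.2) * (Nat.factorial q.1 : ℝ) * (Nat.factorial q.2.1 : ℝ) *
          (Nat.factorial q.2.2.1 : ℝ) * (Nat.factorial q.2.2.2 : ℝ)))
    + ∑ p ∈ symIdx2 r ℓ,
        x₁ ^ p.1 * y₁ ^ p.2 / (2 ^ p.2 * (Nat.factorial p.1 : ℝ) * (Nat.factorial p.2 : ℝ))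

/-- `(x₁, x₂, y₁, y₂, y₃)` solves the equalities of the symmetric system of order `r`. -/
def symSolEq (r : ℕ) (x₁ x₂ y₁ y₂ y₃ : ℝ) : Prop :=
  ∀ ℓ ∈ Finset.Icc 1 r, symLHS r ℓ x₁ x₂ y₁ y₂ y₃ = 0

/-- The polynomial inequality of the symmetric system of order `r`:
`|x₁|^r + |y₁|^{r/2} + |y₂|^{r/2} ≤ |2x₂-x₁|^r + |y₃-y₁|^{r/2} + |y₂+y₃|^{r/2}`. -/
noncomputable def symIneq (r : ℕ) (x₁ x₂ y₁ y₂ y₃ : ℝ) : Prop :=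
  |x₁| ^ (r : ℝ) + |y₁| ^ ((r : ℝ) / 2) + |y₂| ^ ((r : ℝ) / 2) ≤
    |2 * x₂ - x₁| ^ (r : ℝ) + |y₃ - y₁| ^ ((r : ℝ) / 2) + |y₂ + y₃| ^ ((r : ℝ) / 2)

/-- A solution is non-trivial if at least one of `x₁, y₁, y₂` is nonzero. -/
def nontrivSol (x₁ y₁ y₂ : ℝ) : Prop := x₁ ≠ 0 ∨ y₁ ≠ 0 ∨ y₂ ≠ 0

/-- The symmetric order `r̄_sym`: the smallest `r ≥ 1` such that the symmetric system
(equalities together with the inequality) of order `r` has no non-trivial real solution. -/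
noncomputable def symOrder : ℕ :=
  sInf {r : ℕ | 1 ≤ r ∧ ¬ ∃ x₁ x₂ y₁ y₂ y₃ : ℝ,
    nontrivSol x₁ y₁ y₂ ∧ symSolEq r x₁ x₂ y₁ y₂ y₃ ∧ symIneq r x₁ x₂ y₁ y₂ y₃}

lemma key_binom (m : ℕ) (hm : 1 ≤ m) (t : ℝ) :
    ∑ j ∈ Finset.Icc 1 m,
      (-t) ^ j * t ^ (m - j) / (2 ^ m * (Nat.factorial j : ℝ) * (Nat.factorial (m - j) : ℝ))
      = -(t ^ m / (2 ^ m * (Nat.factorial m : ℝ))) := by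
  have hins : Finset.range (m + 1) = insert 0 (Finset.Icc 1 m) := by
    ext x; simp only [Finset.mem_range, Finset.mem_insert, Finset.mem_Icc]; omega
  have hbin : ∑ k ∈ Finset.range (m + 1), (-t) ^ k * t ^ (m - k) * (m.choose k : ℝ) = 0 := by
    rw [← add_pow]
    simp [zero_pow (by omega : m ≠ 0)]
  rw [hins, Finset.sum_insert (by simp)] at hbin
  simp only [pow_zero, Nat.sub_zero, Nat.choose_zero_right, Nat.cast_one, one_mul, mul_one] at hbin
  have hterm : ∀ j ∈ Finset.Icc 1 m,
      (-t) ^ j * t ^ (m - j) / (2 ^ m * (Nat.factorial j : ℝ) * (Nat.factorial (m - j) : ℝ))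
      = ((-t) ^ j * t ^ (m - j) * (m.choose j : ℝ)) / (2 ^ m * (Nat.factorial m : ℝ)) := by
    intro j hj
    have hjm : j ≤ m := (Finset.mem_Icc.mp hj).2
    have hfact : (m.choose j : ℝ) * (Nat.factorial j : ℝ) * (Nat.factorial (m - j) : ℝ)
        = (Nat.factorial m : ℝ) := by
      exact_mod_cast congrArg (Nat.cast : ℕ → ℝ) (Nat.choose_mul_factorial_mul_factorial hjm)
    rw [← hfact]
    have h1 : (Nat.factorial j : ℝ) ≠ 0 := Nat.cast_ne_zero.mpr (Nat.factorial_ne_zero j)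
    have h2 : (Nat.factorial (m - j) : ℝ) ≠ 0 := Nat.cast_ne_zero.mpr (Nat.factorial_ne_zero _)
    have h3 : (m.choose j : ℝ) ≠ 0 := Nat.cast_ne_zero.mpr (Nat.choose_pos hjm).ne'
    field_simp
  rw [Finset.sum_congr rfl hterm, ← Finset.sum_div]
  have : ∑ j ∈ Finset.Icc 1 m, (-t) ^ j * t ^ (m - j) * (m.choose j : ℝ) = -t ^ m := by
    linarith
  rw [this]
  ring

/-- For every `r ≥ 1` and every nonzero `t`, the tuple `(0, 0, t, -t, t)` is a non-trivial
solution of the symmetric system of polynomial equations which violates the inequality. -/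
theorem sym_equalities_insufficient (r : ℕ) (hr : 1 ≤ r) (t : ℝ) (ht : t ≠ 0) :
    nontrivSol 0 t (-t) ∧ symSolEq r 0 0 t (-t) t ∧ ¬ symIneq r 0 0 t (-t) t := by
  refine ⟨Or.inr (Or.inl ht), ?_, ?_⟩
  · intro ℓ hℓ
    rw [Finset.mem_Icc] at hℓ
    unfold symLHS
    rcases Nat.even_or_odd ℓ with ⟨m, hm⟩ | hodd
    · -- even case ℓ = m + m
      have hm1 : 1 ≤ m := by omega
      have hmr : m ≤ r := by omega
      have hsub : ((Finset.Icc 1 m).image (fun j => ((0, j, 0, m - j) : ℕ × ℕ × ℕ × ℕ)))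
          ⊆ symIdx1 r ℓ := by
        intro q hq
        simp only [Finset.mem_image, Finset.mem_Icc] at hq
        obtain ⟨j, ⟨hj1, hj2⟩, rfl⟩ := hq
        simp only [symIdx1, Finset.mem_filter, Finset.mem_product, Finset.mem_range]
        refine ⟨⟨?_, ?_, ?_, ?_⟩, ?_, ?_, ?_, ?_⟩ <;> omega
      have hvan : ∀ q ∈ symIdx1 r ℓ,
          q ∉ ((Finset.Icc 1 m).image (fun j => ((0, j, 0, m - j) : ℕ × ℕ × ℕ × ℕ))) →
          2 ^ q.2.2.1 * (-(0:ℝ)) ^ q.1 * (0:ℝ) ^ q.2.2.1 * (-t) ^ q.2.1 * t ^ q.2.2.2 /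
            (2 ^ (q.2.1 + q.2.2.2) * (Nat.factorial q.1 : ℝ) * (Nat.factorial q.2.1 : ℝ) *
              (Nat.factorial q.2.2.1 : ℝ) * (Nat.factorial q.2.2.2 : ℝ)) = 0 := by
        intro q hq hnq
        simp only [symIdx1, Finset.mem_filter, Finset.mem_product, Finset.mem_range] at hq
        obtain ⟨-, heq, h1, h2, h3⟩ := hq
        rcases Nat.eq_zero_or_pos q.1 with hq1 | hq1
        · rcases Nat.eq_zero_or_pos q.2.2.1 with hq21 | hq21
          · exfalso
            apply hnq
            simp only [Finset.mem_image, Finset.mem_Icc]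
            refine ⟨q.2.1, ⟨by omega, by omega⟩, ?_⟩
            obtain ⟨a, b, c, d⟩ := q
            simp only [Prod.mk.injEq]
            dsimp only at heq h1 h2 h3 hq1 hq21
            exact ⟨by omega, trivial, by omega, by omega⟩
          · rw [zero_pow (by omega), mul_zero, zero_mul, zero_mul, zero_div]
        · rw [neg_zero, zero_pow (by omega), mul_zero, zero_mul, zero_mul, zero_mul, zero_div]
      have h1 : (∑ q ∈ symIdx1 r ℓ,
          2 ^ q.2.2.1 * (-(0:ℝ)) ^ q.1 * (0:ℝ) ^ q.2.2.1 * (-t) ^ q.2.1 * t ^ q.2.2.2 /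
            (2 ^ (q.2.1 + q.2.2.2) * (Nat.factorial q.1 : ℝ) * (Nat.factorial q.2.1 : ℝ) *
              (Nat.factorial q.2.2.1 : ℝ) * (Nat.factorial q.2.2.2 : ℝ)))
          = ∑ j ∈ Finset.Icc 1 m,
            (-t) ^ j * t ^ (m - j) / (2 ^ m * (Nat.factorial j : ℝ) * (Nat.factorial (m - j) : ℝ)) := by
        rw [← Finset.sum_subset hsub hvan, Finset.sum_image (by
          intro a _ b _ hab
          simpa using congrArg (fun q : ℕ × ℕ × ℕ × ℕ => q.2.1) hab)]
        refine Finset.sum_congr rfl ?_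
        intro j hj
        have hjm : j ≤ m := (Finset.mem_Icc.mp hj).2
        have : j + (m - j) = m := by omega
        simp [this, Nat.factorial]
      have h2 : (∑ p ∈ symIdx2 r ℓ,
          (0:ℝ) ^ p.1 * t ^ p.2 / (2 ^ p.2 * (Nat.factorial p.1 : ℝ) * (Nat.factorial p.2 : ℝ)))
          = t ^ m / (2 ^ m * (Nat.factorial m : ℝ)) := by
        rw [Finset.sum_eq_single_of_mem ((0, m) : ℕ × ℕ)]
        · simp [Nat.factorial]
        · simp only [symIdx2, Finset.mem_filter, Finset.mem_product, Finset.mem_range]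
          refine ⟨⟨?_, ?_⟩, ?_, ?_, ?_⟩ <;> omega
        · intro p hp hne
          simp only [symIdx2, Finset.mem_filter, Finset.mem_product, Finset.mem_range] at hp
          obtain ⟨-, heq, -, -⟩ := hp
          rcases Nat.eq_zero_or_pos p.1 with hp1 | hp1
          · exfalso
            apply hne
            obtain ⟨a, b⟩ := p
            simp only [Prod.mk.injEq]
            dsimp only at heq hp1
            omega
          · rw [zero_pow (by omega), zero_mul, zero_div]
      rw [h1, h2, key_binom m hm1 t]
      ring
    · -- odd case: every term vanishes
      obtain ⟨k, hk⟩ := hodd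
      have hA : (∑ q ∈ symIdx1 r ℓ,
          2 ^ q.2.2.1 * (-(0:ℝ)) ^ q.1 * (0:ℝ) ^ q.2.2.1 * (-t) ^ q.2.1 * t ^ q.2.2.2 /
            (2 ^ (q.2.1 + q.2.2.2) * (Nat.factorial q.1 : ℝ) * (Nat.factorial q.2.1 : ℝ) *
              (Nat.factorial q.2.2.1 : ℝ) * (Nat.factorial q.2.2.2 : ℝ))) = 0 := by
        refine Finset.sum_eq_zero ?_
        intro q hq
        simp only [symIdx1, Finset.mem_filter, Finset.mem_product, Finset.mem_range] at hq
        obtain ⟨-, heq, -, -, -⟩ := hq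
        rcases Nat.eq_zero_or_pos q.1 with hq1 | hq1
        · have hq21 : 0 < q.2.2.1 := by omega
          rw [zero_pow (by omega), mul_zero, zero_mul, zero_mul, zero_div]
        · rw [neg_zero, zero_pow (by omega), mul_zero, zero_mul, zero_mul, zero_mul, zero_div]
      have hB : (∑ p ∈ symIdx2 r ℓ,
          (0:ℝ) ^ p.1 * t ^ p.2 / (2 ^ p.2 * (Nat.factorial p.1 : ℝ) * (Nat.factorial p.2 : ℝ))) = 0 := by
        refine Finset.sum_eq_zero ?_
        intro p hp
        simp only [symIdx2, Finset.mem_filter, Finset.mem_product, Finset.mem_range] at hp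
        obtain ⟨-, heq, -, -⟩ := hp
        have hp1 : 0 < p.1 := by omega
        rw [zero_pow (by omega), zero_mul, zero_div]
      rw [hA, hB, add_zero]
  · unfold symIneq
    push_neg
    have h0 : ((0:ℝ)) ^ (r : ℝ) = 0 := Real.zero_rpow (by positivity)
    have h0' : ((0:ℝ)) ^ ((r : ℝ) / 2) = 0 := Real.zero_rpow (by positivity)
    have hpos : 0 < |t| ^ ((r : ℝ) / 2) := Real.rpow_pos_of_pos (abs_pos.mpr ht) _
    simp only [mul_zero, zero_sub, neg_zero, sub_self, neg_add_cancel, abs_zero, abs_neg, h0, h0']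
    linarith
end

section
/- The system consisting of the three polynomial equations (E₁): -2x₁x₂ + y₂/2 + x₁² + y₁/2 = 0, (E₂): x₂y₂ - x₁y₃/2 - 2x₁x₂² - x₁y₂/2 + x₁²x₂ + x₁y₁/2 = 0, (E₃): y₂y₃/4 + x₂²y₂ + y₂²/8 - x₁x₂y₃ - 4x₁x₂³/3 - x₁x₂y₂ + x₁²y₃/4 + x₁²x₂² + x₁²y₂/4 - x₁³x₂/3 + x₁⁴/12 + y₁²/8 + x₁²y₁/4 = 0, together with the inequality (I): |x₁|⁴ + |y₁|² + |y₂|² ≤ |2x₂-x₁|⁴ + |y₃-y₁|² + |y₂+y₃|², has no real solution (x₁,x₂,y₁,y₂,y₃) with at least one of x₁, y₁, y₂ nonzero. -/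
/-- The symmetric system for `r = 4` — the equations `(E₁), (E₂), (E₃)` together with the
inequality `(I)` — has no real solution with at least one of `x₁, y₁, y₂` nonzero. -/
theorem sym_system_r4_no_nontrivial_solution :
    ¬ ∃ x₁ x₂ y₁ y₂ y₃ : ℝ,
      (x₁ ≠ 0 ∨ y₁ ≠ 0 ∨ y₂ ≠ 0) ∧
      (-2 * x₁ * x₂ + y₂ / 2 + x₁ ^ 2 + y₁ / 2 = 0) ∧
      (x₂ * y₂ - x₁ * y₃ / 2 - 2 * x₁ * x₂ ^ 2 - x₁ * y₂ / 2 + x₁ ^ 2 * x₂ + x₁ * y₁ / 2 = 0) ∧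
      (y₂ * y₃ / 4 + x₂ ^ 2 * y₂ + y₂ ^ 2 / 8 - x₁ * x₂ * y₃ - 4 * x₁ * x₂ ^ 3 / 3
          - x₁ * x₂ * y₂ + x₁ ^ 2 * y₃ / 4 + x₁ ^ 2 * x₂ ^ 2 + x₁ ^ 2 * y₂ / 4
          - x₁ ^ 3 * x₂ / 3 + x₁ ^ 4 / 12 + y₁ ^ 2 / 8 + x₁ ^ 2 * y₁ / 4 = 0) ∧
      (|x₁| ^ 4 + |y₁| ^ 2 + |y₂| ^ 2 ≤
        |2 * x₂ - x₁| ^ 4 + |y₃ - y₁| ^ 2 + |y₂ + y₃| ^ 2) := by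
  rintro ⟨x₁, x₂, y₁, y₂, y₃, hnt, h1, h2, h3, hI⟩
  have hab2 : ∀ a : ℝ, |a| ^ 2 = a ^ 2 := fun a => sq_abs a
  have hab4 : ∀ a : ℝ, |a| ^ 4 = a ^ 4 := fun a => by
    rw [← abs_pow]; exact abs_of_nonneg (by positivity)
  rw [hab4, hab4, hab2, hab2, hab2, hab2] at hI
  -- eliminate y₂ using (E₁)
  have hy2 : y₂ = 2 * x₁ * (2 * x₂ - x₁) - y₁ := by linear_combination 2 * h1
  subst hy2
  by_cases hx : x₁ = 0
  · subst hx
    -- nontriviality forces y₁ ≠ 0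
    have hy1 : y₁ ≠ 0 := by
      rcases hnt with h | h | h
      · exact absurd rfl h
      · exact h
      · intro h0; apply h; rw [h0]; ring
    -- (E₂) gives x₂ = 0
    have hx2 : x₂ = 0 := by
      have : x₂ * y₁ = 0 := by linear_combination -h2
      rcases mul_eq_zero.mp this with h | h
      · exact h
      · exact absurd h hy1
    subst hx2
    -- (E₃) gives y₃ = y₁
    have hy3 : y₃ = y₁ := by
      have hmul : y₁ * (y₃ - y₁) = 0 := by linear_combination -4 * h3
      rcases mul_eq_zero.mp hmul with h | h
      · exact absurd h hy1
      · linarith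
    rw [hy3] at hI
    nlinarith [sq_pos_of_ne_zero hy1]
  · -- key identity from 12·x₁·(E₃) − 6·(y₁+x₁²)·(E₂)
    have key : (2 * x₂ - x₁) *
        (3 * (y₁ - x₁ * (2 * x₂ - x₁)) ^ 2 + x₁ ^ 2 * (2 * x₂ - x₁) ^ 2 + x₁ ^ 4) = 0 := by
      linear_combination 12 * x₁ * h3 - 6 * (y₁ + x₁ ^ 2) * h2
    have hpos : 3 * (y₁ - x₁ * (2 * x₂ - x₁)) ^ 2 + x₁ ^ 2 * (2 * x₂ - x₁) ^ 2 + x₁ ^ 4 > 0 := by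
      have : x₁ ^ 4 > 0 := by positivity
      nlinarith [sq_nonneg (y₁ - x₁ * (2 * x₂ - x₁)), sq_nonneg (x₁ * (2 * x₂ - x₁))]
    have hu : 2 * x₂ - x₁ = 0 := by
      rcases mul_eq_zero.mp key with h | h
      · exact h
      · exact absurd h (ne_of_gt hpos)
    -- (E₂) now gives y₃ = y₁
    have hE2 : x₁ * y₃ = (x₁ - (2 * x₂ - x₁)) * (y₁ - x₁ * (2 * x₂ - x₁)) := by
      linear_combination -2 * h2
    rw [hu] at hE2
    have hy3 : y₃ = y₁ := by
      have := mul_left_cancel₀ hx (by linarith [hE2] : x₁ * y₃ = x₁ * y₁)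
      exact this
    rw [hy3, hu] at hI
    have hx4 : x₁ ^ 4 > 0 := by positivity
    nlinarith [sq_nonneg y₁, sq_nonneg (2 * x₁ * (2 * x₂ - x₁) - y₁ + y₁)]
end

section
/- Every real solution of the three polynomial equations (E₁), (E₂), (E₃) (the symmetric system equalities with r = 4) with x₁ ≠ 0 must satisfy x₁ = 2x₂ and y₁ = -y₂ = y₃. -/
/-- Every real solution of the equations `(E₁), (E₂), (E₃)` with `x₁ ≠ 0`
must satisfy `x₁ = 2x₂` and `y₁ = -y₂ = y₃`. -/
theorem sym_r4_equalities_solution_form (x₁ x₂ y₁ y₂ y₃ : ℝ) (hx : x₁ ≠ 0)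
    (hE1 : -2 * x₁ * x₂ + y₂ / 2 + x₁ ^ 2 + y₁ / 2 = 0)
    (hE2 : x₂ * y₂ - x₁ * y₃ / 2 - 2 * x₁ * x₂ ^ 2 - x₁ * y₂ / 2 + x₁ ^ 2 * x₂
        + x₁ * y₁ / 2 = 0)
    (hE3 : y₂ * y₃ / 4 + x₂ ^ 2 * y₂ + y₂ ^ 2 / 8 - x₁ * x₂ * y₃ - 4 * x₁ * x₂ ^ 3 / 3
        - x₁ * x₂ * y₂ + x₁ ^ 2 * y₃ / 4 + x₁ ^ 2 * x₂ ^ 2 + x₁ ^ 2 * y₂ / 4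
        - x₁ ^ 3 * x₂ / 3 + x₁ ^ 4 / 12 + y₁ ^ 2 / 8 + x₁ ^ 2 * y₁ / 4 = 0) :
    x₁ = 2 * x₂ ∧ y₁ = -y₂ ∧ -y₂ = y₃ := by
  have key : (2 * x₂ - x₁) *
      (3 * (y₂ - x₁ * (2 * x₂ - x₁)) ^ 2 + x₁ ^ 2 * (2 * x₂ - x₁) ^ 2 + x₁ ^ 4) = 0 := by
    linear_combination (12 * x₁) * hE3
      + (-3 * x₁ * y₂ - 3 * x₁ * y₁ + 12 * x₁ ^ 2 * x₂ - 6 * x₁ ^ 3) * hE1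
      + (6 * y₂ - 24 * x₁ * x₂ + 6 * x₁ ^ 2) * hE2
  have hpos : 0 < 3 * (y₂ - x₁ * (2 * x₂ - x₁)) ^ 2 + x₁ ^ 2 * (2 * x₂ - x₁) ^ 2 + x₁ ^ 4 := by
    positivity
  have hu : 2 * x₂ - x₁ = 0 := by
    rcases mul_eq_zero.mp key with h | h
    · exact h
    · exact absurd h (ne_of_gt hpos)
  have h1 : x₁ = 2 * x₂ := by linarith
  have h2 : y₁ = -y₂ := by linear_combination 2 * hE1 + 2 * x₁ * hu
  have h3 : x₁ * (y₃ + y₂) = 0 := by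
    linear_combination (-2) * hE2 + 2 * x₁ * hE1 + (y₂ - 2 * x₁ * x₂ + 2 * x₁ ^ 2) * hu
  have h4 : y₃ + y₂ = 0 := by
    rcases mul_eq_zero.mp h3 with h | h
    · exact absurd h hx
    · exact h
  exact ⟨h1, h2, by linarith⟩
end

section
/- If x₁ = 0, then any real solution of (E₁), (E₂), (E₃) with at least one of y₁, y₂ nonzero must have the form (0, 0, y₁, -y₁, y₁) for some y₁ ∈ ℝ. -/
/-- If `x₁ = 0`, any real solution of `(E₁), (E₂), (E₃)` with `y₁ ≠ 0` or `y₂ ≠ 0`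
must have the form `(0, 0, y₁, -y₁, y₁)`. -/
theorem sym_r4_equalities_x1_zero (x₁ x₂ y₁ y₂ y₃ : ℝ) (hx : x₁ = 0)
    (hnt : y₁ ≠ 0 ∨ y₂ ≠ 0)
    (hE1 : -2 * x₁ * x₂ + y₂ / 2 + x₁ ^ 2 + y₁ / 2 = 0)
    (hE2 : x₂ * y₂ - x₁ * y₃ / 2 - 2 * x₁ * x₂ ^ 2 - x₁ * y₂ / 2 + x₁ ^ 2 * x₂
        + x₁ * y₁ / 2 = 0)
    (hE3 : y₂ * y₃ / 4 + x₂ ^ 2 * y₂ + y₂ ^ 2 / 8 - x₁ * x₂ * y₃ - 4 * x₁ * x₂ ^ 3 / 3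
        - x₁ * x₂ * y₂ + x₁ ^ 2 * y₃ / 4 + x₁ ^ 2 * x₂ ^ 2 + x₁ ^ 2 * y₂ / 4
        - x₁ ^ 3 * x₂ / 3 + x₁ ^ 4 / 12 + y₁ ^ 2 / 8 + x₁ ^ 2 * y₁ / 4 = 0) :
    x₂ = 0 ∧ y₂ = -y₁ ∧ y₃ = y₁ := by
  subst hx
  have hy2 : y₂ = -y₁ := by linarith
  subst hy2
  have hy1 : y₁ ≠ 0 := by rcases hnt with h | h; exact h; intro h0; simp [h0] at h
  have hx2 : x₂ = 0 := by
    have := hE2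
    have : x₂ * (-y₁) = 0 := by linarith
    rcases mul_eq_zero.1 this with h | h
    · exact h
    · exact absurd (neg_eq_zero.1 h) hy1
  subst hx2
  refine ⟨rfl, rfl, ?_⟩
  have h3 : -y₁ * (y₃ - y₁) = 0 := by ring_nf; ring_nf at hE3; linarith
  rcases mul_eq_zero.1 h3 with h | h
  · exact absurd (neg_eq_zero.1 h) hy1
  · linarith
end

section
/- For any x₁ ∈ ℝ and y₁ ∈ ℝ, setting x₂ = x₁, y₃ = 0, and y₂ = 2x₁² - y₁ gives a solution of the equations (E₁) and (E₂) (the symmetric system equalities with r = 3) that also satisfies the inequality |x₁|³ + |y₁|^{3/2} + |y₂|^{3/2} ≤ |2x₂-x₁|³ + |y₃-y₁|^{3/2} + |y₂+y₃|^{3/2}. Consequently the symmetric order satisfies r̄_sym ≥ 4. -/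
open Finset

-- Auxiliary evaluation lemmas for `symLHS`.

lemma symLHS_eval_11 (x₁ x₂ y₁ y₂ y₃ : ℝ) :
    symLHS 1 1 x₁ x₂ y₁ y₂ y₃ = 0 := by
  rw [symLHS, show symIdx1 1 1 = {(1,0,0,0)} from by decide,
    show symIdx2 1 1 = {(1,0)} from by decide,
    Finset.sum_singleton, Finset.sum_singleton]
  norm_num [Nat.factorial]

lemma symLHS_eval_21 (x₁ x₂ y₁ y₂ y₃ : ℝ) :
    symLHS 2 1 x₁ x₂ y₁ y₂ y₃ = 0 := by
  rw [symLHS, show symIdx1 2 1 = {(1,0,0,0)} from by decide,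
    show symIdx2 2 1 = {(1,0)} from by decide,
    Finset.sum_singleton, Finset.sum_singleton]
  norm_num [Nat.factorial]

lemma symLHS_eval_31 (x₁ x₂ y₁ y₂ y₃ : ℝ) :
    symLHS 3 1 x₁ x₂ y₁ y₂ y₃ = 0 := by
  rw [symLHS, show symIdx1 3 1 = {(1,0,0,0)} from by decide,
    show symIdx2 3 1 = {(1,0)} from by decide,
    Finset.sum_singleton, Finset.sum_singleton]
  norm_num [Nat.factorial]

lemma symLHS_eval_41 (x₁ x₂ y₁ y₂ y₃ : ℝ) :
    symLHS 4 1 x₁ x₂ y₁ y₂ y₃ = 0 := by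
  rw [symLHS, show symIdx1 4 1 = {(1,0,0,0)} from by decide,
    show symIdx2 4 1 = {(1,0)} from by decide,
    Finset.sum_singleton, Finset.sum_singleton]
  norm_num [Nat.factorial]

lemma symLHS_eval_22 (x₁ x₂ y₁ y₂ y₃ : ℝ) :
    symLHS 2 2 x₁ x₂ y₁ y₂ y₃ = y₂/2 + y₁/2 - 2*x₁*x₂ + x₁^2 := by
  rw [symLHS, show symIdx1 2 2 = {(0,1,0,0), (1,0,1,0), (2,0,0,0)} from by decide,
    show symIdx2 2 2 = {(0,1), (2,0)} from by decide,
    Finset.sum_insert (by decide), Finset.sum_insert (by decide), Finset.sum_singleton, Finset.sum_insert (by decide), Finset.sum_singleton]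
  norm_num [Nat.factorial]
  ring

lemma symLHS_eval_32 (x₁ x₂ y₁ y₂ y₃ : ℝ) :
    symLHS 3 2 x₁ x₂ y₁ y₂ y₃ = y₂/2 + y₁/2 - 2*x₁*x₂ + x₁^2 := by
  rw [symLHS, show symIdx1 3 2 = {(0,1,0,0), (1,0,1,0), (2,0,0,0)} from by decide,
    show symIdx2 3 2 = {(0,1), (2,0)} from by decide,
    Finset.sum_insert (by decide), Finset.sum_insert (by decide), Finset.sum_singleton, Finset.sum_insert (by decide), Finset.sum_singleton]
  norm_num [Nat.factorial]
  ring

lemma symLHS_eval_42 (x₁ x₂ y₁ y₂ y₃ : ℝ) :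
    symLHS 4 2 x₁ x₂ y₁ y₂ y₃ = y₂/2 + y₁/2 - 2*x₁*x₂ + x₁^2 := by
  rw [symLHS, show symIdx1 4 2 = {(0,1,0,0), (1,0,1,0), (2,0,0,0)} from by decide,
    show symIdx2 4 2 = {(0,1), (2,0)} from by decide,
    Finset.sum_insert (by decide), Finset.sum_insert (by decide), Finset.sum_singleton, Finset.sum_insert (by decide), Finset.sum_singleton]
  norm_num [Nat.factorial]
  ring

lemma symLHS_eval_33 (x₁ x₂ y₁ y₂ y₃ : ℝ) :
    symLHS 3 3 x₁ x₂ y₁ y₂ y₃ = x₂*y₂ - x₁*y₃/2 - x₁*y₂/2 + x₁*y₁/2 - 2*x₁*x₂^2 + x₁^2*x₂ := by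
  rw [symLHS, show symIdx1 3 3 = {(0,1,1,0), (1,0,0,1), (1,0,2,0), (1,1,0,0), (2,0,1,0), (3,0,0,0)} from by decide,
    show symIdx2 3 3 = {(1,1), (3,0)} from by decide,
    Finset.sum_insert (by decide), Finset.sum_insert (by decide), Finset.sum_insert (by decide), Finset.sum_insert (by decide), Finset.sum_insert (by decide), Finset.sum_singleton, Finset.sum_insert (by decide), Finset.sum_singleton]
  norm_num [Nat.factorial]
  ring

lemma symLHS_eval_43 (x₁ x₂ y₁ y₂ y₃ : ℝ) :
    symLHS 4 3 x₁ x₂ y₁ y₂ y₃ = x₂*y₂ - x₁*y₃/2 - x₁*y₂/2 + x₁*y₁/2 - 2*x₁*x₂^2 + x₁^2*x₂ := by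
  rw [symLHS, show symIdx1 4 3 = {(0,1,1,0), (1,0,0,1), (1,0,2,0), (1,1,0,0), (2,0,1,0), (3,0,0,0)} from by decide,
    show symIdx2 4 3 = {(1,1), (3,0)} from by decide,
    Finset.sum_insert (by decide), Finset.sum_insert (by decide), Finset.sum_insert (by decide), Finset.sum_insert (by decide), Finset.sum_insert (by decide), Finset.sum_singleton, Finset.sum_insert (by decide), Finset.sum_singleton]
  norm_num [Nat.factorial]
  ring

lemma symLHS_eval_44 (x₁ x₂ y₁ y₂ y₃ : ℝ) :
    symLHS 4 4 x₁ x₂ y₁ y₂ y₃ = y₂*y₃/4 + y₂^2/8 + y₁^2/8 + x₂^2*y₂ - x₁*x₂*y₃ - x₁*x₂*y₂ - 4*x₁*x₂^3/3 + x₁^2*y₃/4 + x₁^2*y₂/4 + x₁^2*y₁/4 + x₁^2*x₂^2 - x₁^3*x₂/3 + x₁^4/12 := by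
  rw [symLHS, show symIdx1 4 4 = {(0,1,0,1), (0,1,2,0), (0,2,0,0), (1,0,1,1), (1,0,3,0), (1,1,1,0), (2,0,0,1), (2,0,2,0), (2,1,0,0), (3,0,1,0), (4,0,0,0)} from by decide,
    show symIdx2 4 4 = {(0,2), (2,1), (4,0)} from by decide,
    Finset.sum_insert (by decide), Finset.sum_insert (by decide), Finset.sum_insert (by decide), Finset.sum_insert (by decide), Finset.sum_insert (by decide), Finset.sum_insert (by decide), Finset.sum_insert (by decide), Finset.sum_insert (by decide), Finset.sum_insert (by decide), Finset.sum_insert (by decide), Finset.sum_singleton, Finset.sum_insert (by decide), Finset.sum_insert (by decide), Finset.sum_singleton]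
  norm_num [Nat.factorial]
  ring

lemma abs_rpow_four (a : ℝ) : |a| ^ ((4:ℕ) : ℝ) = a ^ 4 := by
  rw [Real.rpow_natCast, ← abs_pow, abs_of_nonneg (by positivity)]

lemma abs_rpow_two (a : ℝ) : |a| ^ (((4:ℕ) : ℝ) / 2) = a ^ 2 := by
  rw [show ((4:ℕ):ℝ)/2 = ((2:ℕ):ℝ) by norm_num, Real.rpow_natCast, sq_abs]

/-- The order-4 symmetric system has no non-trivial solution. -/
lemma no_nontriv_four : ¬ ∃ x₁ x₂ y₁ y₂ y₃ : ℝ,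
    nontrivSol x₁ y₁ y₂ ∧ symSolEq 4 x₁ x₂ y₁ y₂ y₃ ∧ symIneq 4 x₁ x₂ y₁ y₂ y₃ := by
  rintro ⟨x₁, x₂, y₁, y₂, y₃, hnt, heq, hin⟩
  have hE2 := heq 2 (by decide)
  have hE3 := heq 3 (by decide)
  have hE4 := heq 4 (by decide)
  rw [symLHS_eval_42] at hE2
  rw [symLHS_eval_43] at hE3
  rw [symLHS_eval_44] at hE4
  have hin4 : x₁^4 + y₁^2 + y₂^2 ≤ (2*x₂-x₁)^4 + (y₃-y₁)^2 + (y₂+y₃)^2 := by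
    have h := hin
    rw [symIneq] at h
    rwa [abs_rpow_four, abs_rpow_four, abs_rpow_two, abs_rpow_two, abs_rpow_two,
      abs_rpow_two] at h
  set B : ℝ := 2*x₂ - x₁ with hB
  set P : ℝ := y₁ - x₁*(2*x₂-x₁) with hP
  set Q : ℝ := y₂ + y₃ - x₁*(2*x₂-x₁) with hQ
  have h1 : x₁*Q + B*P = 0 := by
    rw [hB, hP, hQ]; linear_combination 4*x₂*hE2 - 2*hE3
  have h2 : 3*(P*Q + x₁*B*(P+Q) + P*B^2 + Q*x₁^2) - x₁*B*(x₁^2+B^2) = 0 := by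
    rw [hB, hP, hQ]
    linear_combination (-12)*hE4 + (6*y₃+3*y₂+3*y₁+24*x₂^2-12*x₁*x₂+6*x₁^2)*hE2
  have hineq' : x₁^4 + 2*P^2 ≤ B^4 + 2*Q^2 := by
    have hdiff : B^4 + 2*Q^2 - (x₁^4 + 2*P^2)
        = (B^4 + (y₃-y₁)^2 + (y₂+y₃)^2) - (x₁^4 + y₁^2 + y₂^2) := by
      rw [hB, hP, hQ]; linear_combination (4*(y₃+y₂-y₁))*hE2
    linarith
  have hx1 : x₁ = 0 := by
    by_contra hA
    have hA2 : 0 < x₁^2 := by positivity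
    rcases eq_or_ne B 0 with hB0 | hB0
    · have hQ0 : Q = 0 := by
        have hxq : x₁ * Q = 0 := by rw [hB0] at h1; linarith [h1]
        exact (mul_eq_zero.mp hxq).resolve_left hA
      rw [hB0, hQ0] at hineq'
      nlinarith [sq_nonneg P, sq_nonneg x₁]
    · have h3 : B * (3*P^2 + x₁^2*(x₁^2+B^2)) = 0 := by
        linear_combination (-x₁)*h2 + 3*(P + x₁*B + x₁^2)*h1
      have h4 : 3*P^2 + x₁^2*(x₁^2+B^2) = 0 := (mul_eq_zero.mp h3).resolve_left hB0
      nlinarith [sq_nonneg P, sq_nonneg (x₁*B)]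
  have hy1 : y₁ = 0 := by
    by_contra hy
    have hy2 : 0 < y₁^2 := by positivity
    have hx2 : x₂ = 0 := by
      have hx2y1 : x₂ * y₁ = 0 := by
        rw [hP, hQ, hB, hx1] at h1; linarith [h1]
      exact (mul_eq_zero.mp hx2y1).resolve_right hy
    have hQy : y₁ * (y₂ + y₃) = 0 := by
      rw [hP, hQ, hB, hx1, hx2] at h2; linarith [h2]
    have hQ0 : y₂ + y₃ = 0 := (mul_eq_zero.mp hQy).resolve_left hy
    rw [hP, hQ, hB, hx1, hx2, hQ0] at hineq'
    norm_num at hineq'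
    linarith
  have hy2 : y₂ = 0 := by
    rw [hx1, hy1] at hE2; linarith
  rcases hnt with h | h | h
  · exact h hx1
  · exact h hy1
  · exact h hy2

/-- Setting `x₂ = x₁`, `y₃ = 0`, `y₂ = 2x₁² - y₁` solves `(E₁)` and `(E₂)` (the symmetric
system equalities for `r = 3`) and satisfies the order-3 inequality; consequently the
symmetric order satisfies `r̄_sym ≥ 4`. -/
theorem sym_order_ge_four :
    (∀ x₁ y₁ : ℝ,
      let x₂ : ℝ := x₁
      let y₃ : ℝ := 0
      let y₂ : ℝ := 2 * x₁ ^ 2 - y₁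
      (-2 * x₁ * x₂ + y₂ / 2 + x₁ ^ 2 + y₁ / 2 = 0) ∧
      (x₂ * y₂ - x₁ * y₃ / 2 - 2 * x₁ * x₂ ^ 2 - x₁ * y₂ / 2 + x₁ ^ 2 * x₂
          + x₁ * y₁ / 2 = 0) ∧
      (|x₁| ^ (3 : ℝ) + |y₁| ^ ((3 : ℝ) / 2) + |y₂| ^ ((3 : ℝ) / 2) ≤
        |2 * x₂ - x₁| ^ (3 : ℝ) + |y₃ - y₁| ^ ((3 : ℝ) / 2) + |y₂ + y₃| ^ ((3 : ℝ) / 2))) ∧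
    4 ≤ symOrder := by
  constructor
  · intro x₁ y₁
    refine ⟨by ring, by ring, ?_⟩
    rw [show 2 * x₁ - x₁ = x₁ by ring, show (0:ℝ) - y₁ = -y₁ by ring, add_zero, abs_neg]
  · apply le_csInf
    · refine ⟨4, ?_⟩
      rw [Set.mem_setOf_eq]
      exact ⟨by norm_num, no_nontriv_four⟩
    · rintro b ⟨hb1, hb2⟩
      by_contra hlt
      push_neg at hlt
      apply hb2
      refine ⟨1, 1, 0, 2, 0, Or.inl one_ne_zero, ?_, ?_⟩
      · intro ℓ hℓ
        rw [Finset.mem_Icc] at hℓ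
        obtain ⟨hℓ1, hℓ2⟩ := hℓ
        interval_cases b
        · interval_cases ℓ
          · rw [symLHS_eval_11]
        · interval_cases ℓ
          · rw [symLHS_eval_21]
          · rw [symLHS_eval_22]; norm_num
        · interval_cases ℓ
          · rw [symLHS_eval_31]
          · rw [symLHS_eval_32]; norm_num
          · rw [symLHS_eval_33]; norm_num
      · rw [symIneq]
        norm_num
end
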